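/- arXiv:2601.00033 — 6 statements merged into one kernel-verified Lean document; each statement's English description precedes it below -/
import Mathlib

section
/- The Maschke octic is smooth; equivalently, the only common zero in ℂ⁴ of the four partial derivatives ∂f/∂x, ∂f/∂y, ∂f/∂z, ∂f/∂t of f is the point (0,0,0,0). -/
open Matrix MvPolynomial

lemma maschke_pderiv_C14 (i : Fin 4) : pderiv i (14 : MvPolynomial (Fin 4) ℂ) = 0 := by
  rw [← map_ofNat (C : ℂ →+* MvPolynomial (Fin 4) ℂ) 14]; exact pderiv_C

lemma maschke_pderiv_C168 (i : Fin 4) : pderiv i (168 : MvPolynomial (Fin 4) ℂ) = 0 := by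
  rw [← map_ofNat (C : ℂ →+* MvPolynomial (Fin 4) ℂ) 168]; exact pderiv_C

lemma maschke_key (x y z t : ℂ)
    (hx : x^7 + 7*x^3*(y^4+z^4+t^4) + 42*x*y^2*z^2*t^2 = 0)
    (hy : y^7 + 7*y^3*(x^4+z^4+t^4) + 42*y*x^2*z^2*t^2 = 0)
    (hz : z^7 + 7*z^3*(x^4+y^4+t^4) + 42*z*x^2*y^2*t^2 = 0)
    (ht : t^7 + 7*t^3*(x^4+y^4+z^4) + 42*t*x^2*y^2*z^2 = 0) : x = 0 := by
  have h28 : x^28 = 0 := by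
    linear_combination (-68038621/73728:ℂ)*x^3*y^2*z^2*t^14*hx + (16807/48:ℂ)*x*t^20*hx + (22883777/368640:ℂ)*x^3*y^2*z^6*t^10*hx + (129060953/368640:ℂ)*x*z^4*t^16*hx + (-508501/122880:ℂ)*x^3*y^2*z^10*t^6*hx + (1980213529/40960:ℂ)*x*z^8*t^12*hx + (-22882993/368640:ℂ)*x^3*y^2*z^14*t^2*hx + (-41987407/24576:ℂ)*x*z^12*t^8*hx + (44089703/368640:ℂ)*x*z^16*t^4*hx + (16807/48:ℂ)*x*z^20*hx + (49/23040:ℂ)*x^3*y^6*z^2*t^10*hx + (8621592217/2211840:ℂ)*x*y^4*t^16*hx + (24917039/1920:ℂ)*x^3*y^6*z^6*t^6*hx + (-9906195859/368640:ℂ)*x*y^4*z^4*t^12*hx + (-31056475961/1105920:ℂ)*x*y^4*z^8*t^8*hx + (3871082327/221184:ℂ)*x*y^4*z^12*t^4*hx + (9448729829/2211840:ℂ)*x*y^4*z^16*hx + (3559577/3840:ℂ)*x^3*y^10*z^2*t^6*hx + (-32652141889/2211840:ℂ)*x*y^8*t^12*hx + (-3468404609/737280:ℂ)*x*y^8*z^4*t^8*hx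 + (1556498107/737280:ℂ)*x*y^8*z^8*t^4*hx + (409894451/2211840:ℂ)*x*y^8*z^12*hx + (-54171439/27648:ℂ)*x*y^12*t^8*hx + (2093021/3840:ℂ)*x*y^12*z^4*t^4*hx + (100751/3072:ℂ)*x*y^12*z^8*hx + (586211/23040:ℂ)*x*y^16*t^4*hx + (315/128:ℂ)*x*y^16*z^4*hx + (7/48:ℂ)*x*y^20*hx + (-33222651/2560:ℂ)*x^7*y^2*z^2*t^10*hx + (2401:ℂ)*x^5*t^16*hx + (9604:ℂ)*x^5*z^4*t^12*hx + (14406:ℂ)*x^5*z^8*t^8*hx + (9604:ℂ)*x^5*z^12*t^4*hx + (2401:ℂ)*x^5*z^16*hx + (-2848271489/2211840:ℂ)*x^5*y^4*t^12*hx + (2066772113/2211840:ℂ)*x^5*y^4*z^4*t^8*hx + (2275474859/737280:ℂ)*x^5*y^4*z^8*t^4*hx + (2253100367/2211840:ℂ)*x^5*y^4*z^12*hx + (-2108646761/138240:ℂ)*x^5*y^8*t^8*hx + (29432879/11520:ℂ)*x^5*y^8*z^4*t^4*hx + (196:ℂ)*x^5*y^8*z^8*hx + (3882137/23040:ℂ)*x^5*y^12*t^4*hx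 + (14:ℂ)*x^5*y^12*z^4*hx + (1:ℂ)*x^5*y^16*hx + (-343:ℂ)*x^9*t^12*hx + (-1029:ℂ)*x^9*z^4*t^8*hx + (-1029:ℂ)*x^9*z^8*t^4*hx + (-343:ℂ)*x^9*z^12*hx + (-11575977/5120:ℂ)*x^9*y^4*t^8*hx + (-196:ℂ)*x^9*y^4*z^4*t^4*hx + (-98:ℂ)*x^9*y^4*z^8*hx + (-14:ℂ)*x^9*y^8*t^4*hx + (-14:ℂ)*x^9*y^8*z^4*hx + (49:ℂ)*x^13*t^8*hx + (98:ℂ)*x^13*z^4*t^4*hx + (49:ℂ)*x^13*z^8*hx + (7:ℂ)*x^13*y^4*t^4*hx + (7:ℂ)*x^13*y^4*z^4*hx + (1:ℂ)*x^13*y^8*hx + (-7:ℂ)*x^17*t^4*hx + (-7:ℂ)*x^17*z^4*hx + (1:ℂ)*x^21*hx + (-147515039/368640:ℂ)*y*t^20*hy + (11428804933/2211840:ℂ)*y*z^4*t^16*hy + (-26742736943/552960:ℂ)*y*z^8*t^12*hy + (-1375102453/368640:ℂ)*y*z^12*t^8*hy + (-57248669/1105920:ℂ)*y*z^16*t^4*hy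 + (-948155863/2211840:ℂ)*y*z^20*hy + (-1032605273/368640:ℂ)*y^5*t^16*hy + (33901780409/2211840:ℂ)*y^5*z^4*t^12*hy + (-124183120649/2211840:ℂ)*y^5*z^8*t^8*hy + (-5745231779/737280:ℂ)*y^5*z^12*t^4*hy + (-6564227761/2211840:ℂ)*y^5*z^16*hy + (-2037798497/138240:ℂ)*y^9*z^4*t^8*hy + (86252813/23040:ℂ)*y^9*z^8*t^4*hy + (238651/1024:ℂ)*y^9*z^12*hy + (3962357/23040:ℂ)*y^13*z^4*t^4*hy + (6671/384:ℂ)*y^13*z^8*hy + (49/48:ℂ)*y^17*z^4*hy + (-9285334261/2211840:ℂ)*x^4*y*t^16*hy + (175087241539/2211840:ℂ)*x^4*y*z^4*t^12*hy + (-18170940047/2211840:ℂ)*x^4*y*z^8*t^8*hy + (-36244936511/2211840:ℂ)*x^4*y*z^12*t^4*hy + (-3459233/720:ℂ)*x^4*y*z^16*hy + (30667567399/2211840:ℂ)*x^4*y^5*t^12*hy + (16171993957/2211840:ℂ)*x^4*y^5*z^4*t^8*hy + (-2987873917/737280:ℂ)*x^4*y^5*z^8*t^4*hy + (-3181504277/2211840:ℂ)*x^4*y^5*z^12*hy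 + (2037798497/138240:ℂ)*x^4*y^9*t^8*hy + (-61149823/23040:ℂ)*x^4*y^9*z^4*t^4*hy + (-251963/1024:ℂ)*x^4*y^9*z^8*hy + (-3962357/23040:ℂ)*x^4*y^13*t^4*hy + (-6671/384:ℂ)*x^4*y^13*z^4*hy + (-49/48:ℂ)*x^4*y^17*hy + (5591321879/2211840:ℂ)*x^8*y*t^12*hy + (7056775993/2211840:ℂ)*x^8*y*z^4*t^8*hy + (758733763/737280:ℂ)*x^8*y*z^8*t^4*hy + (761930119/2211840:ℂ)*x^8*y*z^12*hy + (611555231/138240:ℂ)*x^8*y^5*t^8*hy + (-1301657/11520:ℂ)*x^8*y^5*z^4*t^4*hy + (98:ℂ)*x^8*y^5*z^8*hy + (-185951/23040:ℂ)*x^8*y^9*t^4*hy + (14:ℂ)*x^8*y^9*z^4*hy + (1331151/5120:ℂ)*x^12*y*t^8*hy + (-98:ℂ)*x^12*y*z^4*t^4*hy + (-49:ℂ)*x^12*y*z^8*hy + (-7:ℂ)*x^12*y^5*t^4*hy + (-7:ℂ)*x^12*y^5*z^4*hy + (-1:ℂ)*x^12*y^9*hy + (7:ℂ)*x^16*y*t^4*hy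 + (7:ℂ)*x^16*y*z^4*hy + (-1:ℂ)*x^20*y*hy + (18437279/368640:ℂ)*z*t^20*hz + (-11428804933/2211840:ℂ)*z^5*t^16*hz + (-85272153677/2211840:ℂ)*z^9*t^12*hz + (876596857/2211840:ℂ)*z^13*t^8*hz + (-1215825121/2211840:ℂ)*z^17*t^4*hz + (-8621592217/2211840:ℂ)*y^4*z*t^16*hz + (77713479277/2211840:ℂ)*y^4*z^5*t^12*hz + (102403302673/1105920:ℂ)*y^4*z^9*t^8*hz + (11641679203/737280:ℂ)*y^4*z^13*t^4*hz + (6637091041/2211840:ℂ)*y^4*z^17*hz + (6353410331/442368:ℂ)*y^8*z*t^12*hz + (51349092089/2211840:ℂ)*y^8*z^5*t^8*hz + (-171573637/81920:ℂ)*y^8*z^9*t^4*hz + (438112903/2211840:ℂ)*y^8*z^13*hz + (54171439/27648:ℂ)*y^12*z*t^8*hz + (-16520483/23040:ℂ)*y^12*z^5*t^4*hz + (-51373/1024:ℂ)*y^12*z^9*hz + (-586211/23040:ℂ)*y^16*z*t^4*hz + (-1337/384:ℂ)*y^16*z^5*hz + (-7/48:ℂ)*y^20*z*hz + (1622694241/368640:ℂ)*x^4*z*t^16*hz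 + (-159612515251/2211840:ℂ)*x^4*z^5*t^12*hz + (-5247224459/110592:ℂ)*x^4*z^9*t^8*hz + (-37351215223/2211840:ℂ)*x^4*z^13*t^4*hz + (-117649/48:ℂ)*x^4*z^17*hz + (-27479103589/2211840:ℂ)*x^4*y^4*z*t^12*hz + (-2560635791/245760:ℂ)*x^4*y^4*z^5*t^8*hz + (-881782937/737280:ℂ)*x^4*y^4*z^9*t^4*hz + (951286903/2211840:ℂ)*x^4*y^4*z^13*hz + (49490753/138240:ℂ)*x^4*y^8*z*t^8*hz + (-1703653/768:ℂ)*x^4*y^8*z^5*t^4*hz + (51259/1024:ℂ)*x^4*y^8*z^9*hz + (-3479357/23040:ℂ)*x^4*y^12*z*t^4*hz + (1295/384:ℂ)*x^4*y^12*z^5*hz + (1/48:ℂ)*x^4*y^16*z*hz + (-129060953/368640:ℂ)*z^4*t^17*ht + (85311570883/2211840:ℂ)*z^8*t^13*ht + (11152884491/2211840:ℂ)*z^12*t^9*ht + (1065784241/2211840:ℂ)*z^16*t^5*ht + (173689303/2211840:ℂ)*z^20*t*ht + (1032605273/368640:ℂ)*y^4*t^17*ht + (-1449391237/61440:ℂ)*y^4*z^4*t^13*ht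 + (-3702106555/442368:ℂ)*y^4*z^8*t^9*ht + (-28200082771/1105920:ℂ)*y^4*z^12*t^5*ht + (-9521593109/2211840:ℂ)*y^4*z^16*t*ht + (147515039/368640:ℂ)*y^8*t^13*ht + (-277970077/73728:ℂ)*y^8*z^4*t^9*ht + (-277242539/73728:ℂ)*y^8*z^8*t^5*ht + (-227248919/368640:ℂ)*y^8*z^12*t*ht + (-117649/48:ℂ)*x^4*t^17*ht + (-789929/48:ℂ)*x^4*z^4*t^13*ht + (91230303913/2211840:ℂ)*x^4*z^8*t^9*ht + (5237804887/221184:ℂ)*x^4*z^12*t^5*ht + (10760284849/2211840:ℂ)*x^4*z^16*t*ht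
  exact pow_eq_zero_iff (by norm_num : (28:ℕ) ≠ 0) |>.mp h28

/-- The Maschke octic polynomial
`f = x⁸+y⁸+z⁸+t⁸ + 14(x⁴y⁴+x⁴z⁴+x⁴t⁴+y⁴z⁴+y⁴t⁴+z⁴t⁴) + 168x²y²z²t²`. -/
noncomputable def maschkeF : MvPolynomial (Fin 4) ℂ :=
  X 0 ^ 8 + X 1 ^ 8 + X 2 ^ 8 + X 3 ^ 8
    + 14 * (X 0 ^ 4 * X 1 ^ 4 + X 0 ^ 4 * X 2 ^ 4 + X 0 ^ 4 * X 3 ^ 4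
        + X 1 ^ 4 * X 2 ^ 4 + X 1 ^ 4 * X 3 ^ 4 + X 2 ^ 4 * X 3 ^ 4)
    + 168 * (X 0 ^ 2 * X 1 ^ 2 * X 2 ^ 2 * X 3 ^ 2)

/-- The Maschke octic is smooth: the only common zero in `ℂ⁴` of the four partial
derivatives of `f` is the origin. -/
theorem maschke_octic_smooth (v : Fin 4 → ℂ)
    (h : ∀ j : Fin 4, MvPolynomial.eval v (MvPolynomial.pderiv j maschkeF) = 0) :
    v = 0 := by
  have e0 := h 0
  have e1 := h 1
  have e2 := h 2
  have e3 := h 3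
  simp [maschkeF, maschke_pderiv_C14, maschke_pderiv_C168] at e0 e1 e2 e3
  have hx : (v 0)^7 + 7*(v 0)^3*((v 1)^4+(v 2)^4+(v 3)^4)
      + 42*(v 0)*(v 1)^2*(v 2)^2*(v 3)^2 = 0 := by linear_combination e0/8
  have hy : (v 1)^7 + 7*(v 1)^3*((v 0)^4+(v 2)^4+(v 3)^4)
      + 42*(v 1)*(v 0)^2*(v 2)^2*(v 3)^2 = 0 := by linear_combination e1/8
  have hz : (v 2)^7 + 7*(v 2)^3*((v 0)^4+(v 1)^4+(v 3)^4)
      + 42*(v 2)*(v 0)^2*(v 1)^2*(v 3)^2 = 0 := by linear_combination e2/8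
  have ht : (v 3)^7 + 7*(v 3)^3*((v 0)^4+(v 1)^4+(v 2)^4)
      + 42*(v 3)*(v 0)^2*(v 1)^2*(v 2)^2 = 0 := by linear_combination e3/8
  funext j
  fin_cases j <;> simp only [Pi.zero_apply]
  · exact maschke_key (v 0) (v 1) (v 2) (v 3) (by linear_combination hx)
      (by linear_combination hy) (by linear_combination hz) (by linear_combination ht)
  · exact maschke_key (v 1) (v 0) (v 2) (v 3) (by linear_combination hy)
      (by linear_combination hx) (by linear_combination hz) (by linear_combination ht)
  · exact maschke_key (v 2) (v 0) (v 1) (v 3) (by linear_combination hz)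
      (by linear_combination hx) (by linear_combination hy) (by linear_combination ht)
  · exact maschke_key (v 3) (v 0) (v 1) (v 2) (by linear_combination ht)
      (by linear_combination hx) (by linear_combination hy) (by linear_combination hz)
end

section
/- The polynomial f = x⁸+y⁸+z⁸+t⁸ + 14(x⁴y⁴+x⁴z⁴+x⁴t⁴+y⁴z⁴+y⁴t⁴+z⁴t⁴) + 168x²y²z²t² is irreducible in the polynomial ring ℂ[x,y,z,t]. -/
open Matrix MvPolynomial

namespace MaschkeAux

open Polynomial

noncomputable section

local notation "R" => Polynomial ℂ
local notation "S" => Polynomial (Polynomial ℂ)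

/-- `a = 14(u⁴+1)`. -/
def aP : R := 14 * Polynomial.X ^ 4 + 14
/-- `b = u⁸+14u⁴+1`. -/
def bP : R := Polynomial.X ^ 8 + 14 * Polynomial.X ^ 4 + 1
/-- `Δ = a² - 4b`. -/
def dP : R := 192 * Polynomial.X ^ 8 + 336 * Polynomial.X ^ 4 + 192
/-- The specialized Maschke polynomial `F = X⁸ + a X⁴ + b` over `ℂ[u]`. -/
def FP : S := Polynomial.X ^ 8 + Polynomial.C aP * Polynomial.X ^ 4 + Polynomial.C bP

lemma deriv_bP : derivative bP = 8 * Polynomial.X ^ 7 + 56 * Polynomial.X ^ 3 := by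
  unfold bP
  simp [_root_.map_ofNat]
  ring

lemma deriv_dP : derivative dP = 1536 * Polynomial.X ^ 7 + 1344 * Polynomial.X ^ 3 := by
  unfold dP
  simp [_root_.map_ofNat]
  ring

lemma sep_bP : bP.Separable := by
  rw [Polynomial.separable_def, deriv_bP]
  refine ⟨Polynomial.C (384⁻¹ : ℂ) * (56 * Polynomial.X ^ 4 + 384),
    Polynomial.C (384⁻¹ : ℂ) * (-(7 * Polynomial.X ^ 5) - 97 * Polynomial.X), ?_⟩
  have h384 : ((56 * Polynomial.X ^ 4 + 384) * bP
      + (-(7 * Polynomial.X ^ 5) - 97 * Polynomial.X)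
        * (8 * Polynomial.X ^ 7 + 56 * Polynomial.X ^ 3) : R) = 384 := by
    unfold bP; ring
  have h1 : (Polynomial.C (384⁻¹ : ℂ) : R) * 384 = 1 := by
    rw [show ((384 : R)) = Polynomial.C (384 : ℂ) from (_root_.map_ofNat (Polynomial.C : ℂ →+* R) 384).symm, ← Polynomial.C_mul]
    norm_num
  linear_combination (Polynomial.C (384⁻¹ : ℂ)) * h384 + h1

lemma sep_dP : dP.Separable := by
  rw [Polynomial.separable_def, deriv_dP]
  refine ⟨Polynomial.C ((11520 : ℂ)⁻¹) * (60 - 224 * Polynomial.X ^ 4),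
    Polynomial.C ((11520 : ℂ)⁻¹) * (17 * Polynomial.X + 28 * Polynomial.X ^ 5), ?_⟩
  have hc : ((60 - 224 * Polynomial.X ^ 4) * dP
      + (17 * Polynomial.X + 28 * Polynomial.X ^ 5)
        * (1536 * Polynomial.X ^ 7 + 1344 * Polynomial.X ^ 3) : R) = 11520 := by
    unfold dP; ring
  have h1 : (Polynomial.C ((11520 : ℂ)⁻¹) : R) * 11520 = 1 := by
    rw [show ((11520 : R)) = Polynomial.C (11520 : ℂ) from (_root_.map_ofNat (Polynomial.C : ℂ →+* R) 11520).symm, ← Polynomial.C_mul]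
    norm_num
  linear_combination (Polynomial.C ((11520 : ℂ)⁻¹)) * hc + h1

lemma bP_natDegree : bP.natDegree = 8 := by unfold bP; compute_degree!

lemma dP_natDegree : dP.natDegree = 8 := by unfold dP; compute_degree!

lemma not_sq_bP (c : R) : c * c ≠ bP := by
  intro h
  have hu : IsUnit c := sep_bP.squarefree c ⟨1, by rw [h, mul_one]⟩
  have hc0 : c ≠ 0 := hu.ne_zero
  have hd : (c * c).natDegree = 8 := by rw [h, bP_natDegree]
  rw [Polynomial.natDegree_mul hc0 hc0, Polynomial.natDegree_eq_zero_of_isUnit hu] at hd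
  norm_num at hd

lemma not_sq_dP (c : R) : c * c ≠ dP := by
  intro h
  have hu : IsUnit c := sep_dP.squarefree c ⟨1, by rw [h, mul_one]⟩
  have hc0 : c ≠ 0 := hu.ne_zero
  have hd : (c * c).natDegree = 8 := by rw [h, dP_natDegree]
  rw [Polynomial.natDegree_mul hc0 hc0, Polynomial.natDegree_eq_zero_of_isUnit hu] at hd
  norm_num at hd

lemma quadContra (γ : R) (h : γ * γ - aP * γ + bP = 0) : False := by
  apply not_sq_dP (2 * γ - aP)
  unfold aP bP dP at *
  linear_combination 4 * h

/-! ### shapes -/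

/-- monic quadratic shape -/
def q2 (c1 c0 : R) : S := Polynomial.X ^ 2 + Polynomial.C c1 * Polynomial.X + Polynomial.C c0
/-- monic cubic shape -/
def q3 (c2 c1 c0 : R) : S := Polynomial.X ^ 3 + Polynomial.C c2 * Polynomial.X ^ 2
  + Polynomial.C c1 * Polynomial.X + Polynomial.C c0
/-- monic quartic shape -/
def q4 (c3 c2 c1 c0 : R) : S := Polynomial.X ^ 4 + Polynomial.C c3 * Polynomial.X ^ 3
  + Polynomial.C c2 * Polynomial.X ^ 2 + Polynomial.C c1 * Polynomial.X + Polynomial.C c0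

lemma q2_coeff0 (c1 c0 : R) : (q2 c1 c0).coeff 0 = c0 := by simp [q2, Polynomial.coeff_X_pow]
lemma q2_coeff1 (c1 c0 : R) : (q2 c1 c0).coeff 1 = c1 := by simp [q2, Polynomial.coeff_X_pow]
lemma q3_coeff0 (c2 c1 c0 : R) : (q3 c2 c1 c0).coeff 0 = c0 := by simp [q3, Polynomial.coeff_X_pow]
lemma q3_coeff1 (c2 c1 c0 : R) : (q3 c2 c1 c0).coeff 1 = c1 := by simp [q3, Polynomial.coeff_X_pow]
lemma q3_coeff2 (c2 c1 c0 : R) : (q3 c2 c1 c0).coeff 2 = c2 := by simp [q3, Polynomial.coeff_X_pow]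
lemma q4_coeff0 (c3 c2 c1 c0 : R) : (q4 c3 c2 c1 c0).coeff 0 = c0 := by simp [q4, Polynomial.coeff_X_pow]
lemma q4_coeff1 (c3 c2 c1 c0 : R) : (q4 c3 c2 c1 c0).coeff 1 = c1 := by simp [q4, Polynomial.coeff_X_pow]
lemma q4_coeff2 (c3 c2 c1 c0 : R) : (q4 c3 c2 c1 c0).coeff 2 = c2 := by simp [q4, Polynomial.coeff_X_pow]
lemma q4_coeff3 (c3 c2 c1 c0 : R) : (q4 c3 c2 c1 c0).coeff 3 = c3 := by simp [q4, Polynomial.coeff_X_pow]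

lemma q2_natDegree (c1 c0 : R) : (q2 c1 c0).natDegree = 2 := by unfold q2; compute_degree!
lemma q3_natDegree (c2 c1 c0 : R) : (q3 c2 c1 c0).natDegree = 3 := by unfold q3; compute_degree!
lemma q4_natDegree (c3 c2 c1 c0 : R) : (q4 c3 c2 c1 c0).natDegree = 4 := by unfold q4; compute_degree!

lemma q2_monic (c1 c0 : R) : (q2 c1 c0).Monic := by
  unfold Polynomial.Monic Polynomial.leadingCoeff
  rw [q2_natDegree]
  simp [q2, Polynomial.coeff_X_pow]
lemma q3_monic (c2 c1 c0 : R) : (q3 c2 c1 c0).Monic := by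
  unfold Polynomial.Monic Polynomial.leadingCoeff
  rw [q3_natDegree]
  simp [q3, Polynomial.coeff_X_pow]
lemma q4_monic (c3 c2 c1 c0 : R) : (q4 c3 c2 c1 c0).Monic := by
  unfold Polynomial.Monic Polynomial.leadingCoeff
  rw [q4_natDegree]
  simp [q4, Polynomial.coeff_X_pow]

lemma q2_inj {a b a' b' : R} (h : q2 a b = q2 a' b') : a = a' ∧ b = b' := by
  constructor
  · have h1 := congrArg (fun p => Polynomial.coeff p 1) h
    simpa [q2_coeff1] using h1
  · have h0 := congrArg (fun p => Polynomial.coeff p 0) h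
    simpa [q2_coeff0] using h0

lemma q3_inj {a b c a' b' c' : R} (h : q3 a b c = q3 a' b' c') : a = a' ∧ b = b' ∧ c = c' := by
  refine ⟨?_, ?_, ?_⟩
  · have h2 := congrArg (fun p => Polynomial.coeff p 2) h
    simpa [q3_coeff2] using h2
  · have h1 := congrArg (fun p => Polynomial.coeff p 1) h
    simpa [q3_coeff1] using h1
  · have h0 := congrArg (fun p => Polynomial.coeff p 0) h
    simpa [q3_coeff0] using h0

lemma q4_inj {a b c d a' b' c' d' : R} (h : q4 a b c d = q4 a' b' c' d') :
    a = a' ∧ b = b' ∧ c = c' ∧ d = d' := by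
  refine ⟨?_, ?_, ?_, ?_⟩
  · have h3 := congrArg (fun p => Polynomial.coeff p 3) h
    simpa [q4_coeff3] using h3
  · have h2 := congrArg (fun p => Polynomial.coeff p 2) h
    simpa [q4_coeff2] using h2
  · have h1 := congrArg (fun p => Polynomial.coeff p 1) h
    simpa [q4_coeff1] using h1
  · have h0 := congrArg (fun p => Polynomial.coeff p 0) h
    simpa [q4_coeff0] using h0

/-! ### representation of monic polynomials of small degree -/

lemma repr2 {p : S} (hm : p.Monic) (hd : p.natDegree = 2) :
    p = q2 (p.coeff 1) (p.coeff 0) := by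
  have h2 : p.coeff 2 = 1 := by
    have hc := hm.coeff_natDegree
    rwa [hd] at hc
  ext n
  match n with
  | 0 => simp [q2, Polynomial.coeff_X_pow]
  | 1 => simp [q2, Polynomial.coeff_X_pow]
  | 2 => simp [q2, Polynomial.coeff_X_pow, h2]
  | (m + 3) =>
    rw [p.coeff_eq_zero_of_natDegree_lt (by omega)]
    simp [q2, Polynomial.coeff_X_pow, Polynomial.coeff_C]

lemma repr3 {p : S} (hm : p.Monic) (hd : p.natDegree = 3) :
    p = q3 (p.coeff 2) (p.coeff 1) (p.coeff 0) := by
  have h3 : p.coeff 3 = 1 := by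
    have hc := hm.coeff_natDegree
    rwa [hd] at hc
  ext n
  match n with
  | 0 => simp [q3, Polynomial.coeff_X_pow]
  | 1 => simp [q3, Polynomial.coeff_X_pow]
  | 2 => simp [q3, Polynomial.coeff_X_pow]
  | 3 => simp [q3, Polynomial.coeff_X_pow, h3]
  | (m + 4) =>
    rw [p.coeff_eq_zero_of_natDegree_lt (by omega)]
    simp [q3, Polynomial.coeff_X_pow, Polynomial.coeff_C]

lemma repr4 {p : S} (hm : p.Monic) (hd : p.natDegree = 4) :
    p = q4 (p.coeff 3) (p.coeff 2) (p.coeff 1) (p.coeff 0) := by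
  have h4 : p.coeff 4 = 1 := by
    have hc := hm.coeff_natDegree
    rwa [hd] at hc
  ext n
  match n with
  | 0 => simp [q4, Polynomial.coeff_X_pow]
  | 1 => simp [q4, Polynomial.coeff_X_pow]
  | 2 => simp [q4, Polynomial.coeff_X_pow]
  | 3 => simp [q4, Polynomial.coeff_X_pow]
  | 4 => simp [q4, Polynomial.coeff_X_pow, h4]
  | (m + 5) =>
    rw [p.coeff_eq_zero_of_natDegree_lt (by omega)]
    simp [q4, Polynomial.coeff_X_pow, Polynomial.coeff_C]

/-! ### the automorphism `X ↦ i X` -/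

/-- the constant `i` in `ℂ[u]`. -/
def cI : R := Polynomial.C Complex.I

/-- the ring hom `S → S`, `X ↦ i X`. -/
def sg : S →+* S := eval₂RingHom (Polynomial.C : R →+* S) (Polynomial.C cI * Polynomial.X)

/-- the inverse ring hom, `X ↦ -i X`. -/
def sginv : S →+* S :=
  eval₂RingHom (Polynomial.C : R →+* S) (Polynomial.C (Polynomial.C (-Complex.I)) * Polynomial.X)

lemma sg_C (r : R) : sg (Polynomial.C r) = Polynomial.C r := by
  simp [sg, coe_eval₂RingHom]

lemma sg_X : sg Polynomial.X = Polynomial.C cI * Polynomial.X := by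
  simp [sg, coe_eval₂RingHom]

lemma sginv_C (r : R) : sginv (Polynomial.C r) = Polynomial.C r := by
  simp [sginv, coe_eval₂RingHom]

lemma sginv_X : sginv Polynomial.X = Polynomial.C (Polynomial.C (-Complex.I)) * Polynomial.X := by
  simp [sginv, coe_eval₂RingHom]

lemma comp1 : sginv.comp sg = RingHom.id (Polynomial (Polynomial ℂ)) := by
  apply Polynomial.ringHom_ext
  · intro a
    simp [sg_C, sginv_C]
  · simp only [RingHom.comp_apply, sg_X, _root_.map_mul, sginv_C, sginv_X, RingHom.id_apply]
    rw [← mul_assoc, ← Polynomial.C_mul, cI, ← Polynomial.C_mul]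
    norm_num [Complex.I_mul_I]

lemma comp2 : sg.comp sginv = RingHom.id (Polynomial (Polynomial ℂ)) := by
  apply Polynomial.ringHom_ext
  · intro a
    simp [sg_C, sginv_C]
  · simp only [RingHom.comp_apply, sginv_X, _root_.map_mul, sg_C, sg_X, RingHom.id_apply]
    rw [← mul_assoc, ← Polynomial.C_mul, cI, ← Polynomial.C_mul]
    norm_num [Complex.I_mul_I]

/-- `X ↦ i X` as a ring equivalence. -/
def sge : S ≃+* S where
  toFun := sg
  invFun := sginv
  left_inv := fun p => DFunLike.congr_fun comp1 p
  right_inv := fun p => DFunLike.congr_fun comp2 p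
  map_mul' := fun x y => _root_.map_mul sg x y
  map_add' := fun x y => _root_.map_add sg x y

lemma sge_apply (p : S) : sge p = sg p := rfl

lemma hJ2 : (Polynomial.C cI : S) ^ 2 = -1 := by
  rw [← _root_.map_pow, cI, ← _root_.map_pow, Complex.I_sq]
  simp

lemma hcI2 : cI * cI = -1 := by
  unfold cI
  rw [← Polynomial.C_mul, Complex.I_mul_I]
  simp

lemma irr_neg {p : Polynomial (Polynomial ℂ)} (h : Irreducible p) : Irreducible (-p) := by
  refine Associated.irreducible ⟨⟨-1, -1, by norm_num, by norm_num⟩, ?_⟩ h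
  exact mul_neg_one p

lemma irr_sg {p : S} (h : Irreducible p) : Irreducible (sg p) := by
  rw [← sge_apply]
  exact (MulEquiv.irreducible_iff sge).mpr h

lemma FP_sg : sg FP = FP := by
  unfold FP
  simp only [_root_.map_add, _root_.map_mul, _root_.map_pow, sg_C, sg_X]
  linear_combination (((Polynomial.C cI : S) ^ 6 - (Polynomial.C cI : S) ^ 4
    + (Polynomial.C cI : S) ^ 2 - 1) * Polynomial.X ^ 8
    + Polynomial.C aP * ((Polynomial.C cI : S) ^ 2 - 1) * Polynomial.X ^ 4) * hJ2

lemma dvd_sg {p : S} (h : p ∣ FP) : sg p ∣ FP := by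
  have hm := map_dvd sg h
  rwa [FP_sg] at hm

lemma sg_q2 (c1 c0 : R) : sg (q2 c1 c0) = -q2 (-(cI * c1)) (-c0) := by
  unfold q2
  simp only [_root_.map_add, _root_.map_mul, _root_.map_pow, sg_C, sg_X, _root_.map_neg, Polynomial.C_mul, Polynomial.C_neg]
  linear_combination (Polynomial.X ^ 2 : S) * hJ2

lemma sg_q3 (c2 c1 c0 : R) :
    Polynomial.C cI * sg (q3 c2 c1 c0) = q3 (-(cI * c2)) (-c1) (cI * c0) := by
  unfold q3
  simp only [_root_.map_add, _root_.map_mul, _root_.map_pow, sg_C, sg_X, _root_.map_neg, Polynomial.C_mul, Polynomial.C_neg]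
  linear_combination (((Polynomial.C cI : S) ^ 2 - 1) * Polynomial.X ^ 3
    + Polynomial.C c2 * (Polynomial.C cI : S) * Polynomial.X ^ 2
    + Polynomial.C c1 * Polynomial.X) * hJ2

lemma sg_q4 (c3 c2 c1 c0 : R) :
    sg (q4 c3 c2 c1 c0) = q4 (-(cI * c3)) (-c2) (cI * c1) c0 := by
  unfold q4
  simp only [_root_.map_add, _root_.map_mul, _root_.map_pow, sg_C, sg_X, _root_.map_neg, Polynomial.C_mul, Polynomial.C_neg]
  linear_combination (((Polynomial.C cI : S) ^ 2 - 1) * Polynomial.X ^ 4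
    + Polynomial.C c3 * (Polynomial.C cI : S) * Polynomial.X ^ 3
    + Polynomial.C c2 * Polynomial.X ^ 2) * hJ2

/-! ### small helper lemmas -/

lemma cfac {w : ℂ} (hw : w ≠ 0) {c : R} (h : Polynomial.C w * c = 0) : c = 0 := by
  rcases mul_eq_zero.mp h with h' | h'
  · exact absurd (Polynomial.C_eq_zero.mp h') hw
  · exact h'

lemma one_add_I_ne : (1 : ℂ) + Complex.I ≠ 0 := by
  intro h
  have him := congrArg Complex.im h
  simp at him

lemma one_sub_I_ne : (1 : ℂ) - Complex.I ≠ 0 := by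
  intro h
  have him := congrArg Complex.im h
  simp at him

lemma two_I_ne : (2 : ℂ) * Complex.I ≠ 0 := by
  intro h
  have him := congrArg Complex.im h
  simp at him

lemma prime_of_irr {p : S} (hp : Irreducible p) : Prime p :=
  UniqueFactorizationMonoid.irreducible_iff_prime.mp hp

lemma not_dvd_of_ne {G H : S} (hGm : G.Monic) (hHm : H.Monic) (hG : Irreducible G)
    (hH : Irreducible H) (hne : G ≠ H) : ¬ G ∣ H := fun hd =>
  hne (Polynomial.eq_of_monic_of_associated hGm hHm (hG.associated_of_dvd hH hd))

lemma dvd_cancel {P A B : S} (hP : Prime P) (hnd : ¬ P ∣ A) (h : P ∣ A * B) : P ∣ B :=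
  (hP.dvd_or_dvd h).resolve_left hnd

lemma FP_monic : FP.Monic := by
  have h : Polynomial.degree (Polynomial.C aP * Polynomial.X ^ 4 + Polynomial.C bP : S) < 8 := by
    apply lt_of_le_of_lt (Polynomial.degree_add_le _ _)
    apply max_lt
    · apply lt_of_le_of_lt (Polynomial.degree_C_mul_X_pow_le 4 _)
      norm_num
    · apply lt_of_le_of_lt Polynomial.degree_C_le
      norm_num
  have hm := Polynomial.monic_X_pow_add
    (n := 8) (p := Polynomial.C aP * Polynomial.X ^ 4 + Polynomial.C bP) h
  unfold FP
  rw [add_assoc]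
  exact hm

lemma FP_natDegree : FP.natDegree = 8 := by
  unfold FP; compute_degree!

lemma FP_ne_zero : FP ≠ 0 := FP_monic.ne_zero

lemma FP_coeff0 : FP.coeff 0 = bP := by
  simp [FP, Polynomial.coeff_X_pow]

lemma monic_dvd_eq {P : S} (hPm : P.Monic) (hdeg : P.natDegree = 8) (h : P ∣ FP) : FP = P := by
  obtain ⟨K, hK⟩ := h
  have hK0 : K ≠ 0 := by
    rintro rfl
    rw [mul_zero] at hK
    exact FP_ne_zero hK
  have h8 : (8 : ℕ) = 8 + K.natDegree := by
    conv_lhs => rw [← FP_natDegree]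
    rw [hK, Polynomial.natDegree_mul hPm.ne_zero hK0, hdeg]
  have hKdeg : K.natDegree = 0 := by omega
  have hKlc : K.leadingCoeff = 1 := by
    have hmon := FP_monic
    unfold Polynomial.Monic at hmon
    rw [hK, Polynomial.leadingCoeff_mul, hPm.leadingCoeff, one_mul] at hmon
    exact hmon
  have hK1 : K = 1 := by
    rw [Polynomial.eq_C_of_natDegree_eq_zero hKdeg,
      show K.coeff 0 = (1 : R) from by
        rw [← hKlc]; unfold Polynomial.leadingCoeff; rw [hKdeg]]
    simp
  rw [hK, hK1, mul_one]

/-- divisor `X⁴ + γ` of `F` leads to a contradiction. -/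
lemma X4_dvd_contra (γ : R) (h : (Polynomial.X ^ 4 + Polynomial.C γ : S) ∣ FP) : False := by
  have hid : FP - (Polynomial.X ^ 4 + Polynomial.C γ) * (Polynomial.X ^ 4 + Polynomial.C (aP - γ))
      = Polynomial.C (bP - aP * γ + γ * γ) := by
    unfold FP
    simp only [_root_.map_sub, _root_.map_add, _root_.map_mul]
    ring
  have hdvd : (Polynomial.X ^ 4 + Polynomial.C γ : S) ∣
      Polynomial.C (bP - aP * γ + γ * γ) := by
    rw [← hid]
    exact dvd_sub h (Dvd.intro _ rfl)
  have hzero : bP - aP * γ + γ * γ = 0 := by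
    by_contra hne
    have hCne : (Polynomial.C (bP - aP * γ + γ * γ) : S) ≠ 0 :=
      Polynomial.C_ne_zero.mpr hne
    have hle := Polynomial.natDegree_le_of_dvd hdvd hCne
    have h4 : (Polynomial.X ^ 4 + Polynomial.C γ : S).natDegree = 4 := by
      compute_degree!
    rw [h4, Polynomial.natDegree_C] at hle
    omega
  exact quadContra γ (by linear_combination hzero)

/-! ### the four degree cases -/

lemma case1 (β : R) (h : (Polynomial.X + Polynomial.C β : S) ∣ FP) : False := by
  have h' : (Polynomial.X - Polynomial.C (-β) : S) ∣ FP := by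
    rwa [_root_.map_neg, sub_neg_eq_add]
  have hroot : FP.IsRoot (-β) := Polynomial.dvd_iff_isRoot.mp h'
  have heval : (-β) ^ 8 + aP * (-β) ^ 4 + bP = 0 := by
    have hr := hroot
    unfold FP Polynomial.IsRoot at hr
    simpa using hr
  exact quadContra (-(β * β * β * β)) (by linear_combination heval)

lemma case2 (c1 c0 : R) (hG : Irreducible (q2 c1 c0)) (hdvd : q2 c1 c0 ∣ FP) : False := by
  by_cases hc1 : c1 = 0
  · subst hc1
    by_cases hc0 : c0 = 0
    · subst hc0
      have hXX : q2 0 0 = Polynomial.X * Polynomial.X := by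
        unfold q2; ring_nf; simp
      rcases hG.isUnit_or_isUnit hXX with h | h <;> exact Polynomial.not_isUnit_X h
    · have hsg : sg (q2 0 c0) = -q2 0 (-c0) := by
        have hs := sg_q2 0 c0
        simpa using hs
      have hdvd2 : q2 0 (-c0) ∣ FP := by
        have h1 : sg (q2 0 c0) ∣ FP := dvd_sg hdvd
        rw [hsg] at h1
        exact neg_dvd.mp h1
      have hirr2 : Irreducible (q2 0 (-c0)) := by
        have hi := irr_sg hG
        rw [hsg] at hi
        have h2 := irr_neg hi
        rwa [neg_neg] at h2
      have hne : q2 0 c0 ≠ q2 0 (-c0) := by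
        intro h
        have h0 := (q2_inj h).2
        apply hc0
        apply cfac (two_ne_zero (α := ℂ)) (c := c0)
        rw [_root_.map_ofNat]
        linear_combination h0
      have hprod : q2 0 c0 * q2 0 (-c0) ∣ FP := by
        obtain ⟨K, hK⟩ := hdvd
        have h2 : q2 0 (-c0) ∣ K := by
          apply dvd_cancel (prime_of_irr hirr2)
            (not_dvd_of_ne (q2_monic _ _) (q2_monic _ _) hirr2 hG (Ne.symm hne))
          rw [← hK]; exact hdvd2
        obtain ⟨L, hL⟩ := h2
        exact ⟨L, by rw [hK, hL, mul_assoc]⟩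
      have hform : q2 0 c0 * q2 0 (-c0) = Polynomial.X ^ 4 + Polynomial.C (-(c0 * c0)) := by
        unfold q2
        simp only [_root_.map_neg, _root_.map_mul, map_zero]
        ring
      rw [hform] at hprod
      exact X4_dvd_contra _ hprod
  · -- c1 ≠ 0 : four distinct conjugate factors
    set G1 := q2 c1 c0 with hG1
    set G2 := q2 (-(cI * c1)) (-c0) with hG2
    set G3 := q2 (-c1) c0 with hG3
    set G4 := q2 (cI * c1) (-c0) with hG4
    have hsg1 : sg G1 = -G2 := sg_q2 c1 c0
    have hsg2 : sg G2 = -G3 := by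
      have hs := sg_q2 (-(cI * c1)) (-c0)
      rw [hG2, hs, hG3]
      have hx : -(cI * -(cI * c1)) = -c1 := by linear_combination c1 * hcI2
      rw [hx, neg_neg]
    have hsg3 : sg G3 = -G4 := by
      have hs := sg_q2 (-c1) c0
      rw [hG3, hs, hG4]
      rw [mul_neg, neg_neg]
    have hI2 : Irreducible G2 := by
      have hi := irr_sg hG; rw [hsg1] at hi; exact (by have h2 := irr_neg hi; rwa [neg_neg] at h2)
    have hI3 : Irreducible G3 := by
      have hi := irr_sg hI2; rw [hsg2] at hi; exact (by have h2 := irr_neg hi; rwa [neg_neg] at h2)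
    have hI4 : Irreducible G4 := by
      have hi := irr_sg hI3; rw [hsg3] at hi; exact (by have h2 := irr_neg hi; rwa [neg_neg] at h2)
    have hd2 : G2 ∣ FP := by
      have hv := dvd_sg hdvd; rw [hsg1] at hv; exact neg_dvd.mp hv
    have hd3 : G3 ∣ FP := by
      have hv := dvd_sg hd2; rw [hsg2] at hv; exact neg_dvd.mp hv
    have hd4 : G4 ∣ FP := by
      have hv := dvd_sg hd3; rw [hsg3] at hv; exact neg_dvd.mp hv
    have e12 : G1 ≠ G2 := by
      intro h
      have h1 := (q2_inj h).1
      apply hc1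
      apply cfac one_add_I_ne (c := c1)
      unfold cI at h1
      rw [_root_.map_add, _root_.map_one]
      linear_combination h1
    have e13 : G1 ≠ G3 := by
      intro h
      have h1 := (q2_inj h).1
      apply hc1
      apply cfac (two_ne_zero (α := ℂ)) (c := c1)
      rw [_root_.map_ofNat]
      linear_combination h1
    have e14 : G1 ≠ G4 := by
      intro h
      have h1 := (q2_inj h).1
      apply hc1
      apply cfac one_sub_I_ne (c := c1)
      unfold cI at h1
      rw [_root_.map_sub, _root_.map_one]
      linear_combination h1
    have e23 : G2 ≠ G3 := by
      intro h
      have h1 := (q2_inj h).1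
      apply hc1
      apply cfac one_sub_I_ne (c := c1)
      unfold cI at h1
      rw [_root_.map_sub, _root_.map_one]
      linear_combination h1
    have e24 : G2 ≠ G4 := by
      intro h
      have h1 := (q2_inj h).1
      apply hc1
      apply cfac two_I_ne (c := c1)
      unfold cI at h1
      rw [_root_.map_mul, _root_.map_ofNat]
      linear_combination -h1
    have e34 : G3 ≠ G4 := by
      intro h
      have h1 := (q2_inj h).1
      apply hc1
      apply cfac one_add_I_ne (c := c1)
      unfold cI at h1
      rw [_root_.map_add, _root_.map_one]
      linear_combination -h1
    obtain ⟨K1, hK1⟩ := hdvd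
    have h2 : G2 ∣ K1 := by
      apply dvd_cancel (prime_of_irr hI2)
        (not_dvd_of_ne (q2_monic _ _) (q2_monic _ _) hI2 hG (Ne.symm e12))
      rw [← hK1]; exact hd2
    obtain ⟨K2, hK2⟩ := h2
    have hd3' : G3 ∣ G1 * (G2 * K2) := by
      rw [← hK2, ← hK1]; exact hd3
    have h3 : G3 ∣ K2 :=
      dvd_cancel (prime_of_irr hI3)
        (not_dvd_of_ne (q2_monic _ _) (q2_monic _ _) hI3 hI2 (Ne.symm e23))
        (dvd_cancel (prime_of_irr hI3)
          (not_dvd_of_ne (q2_monic _ _) (q2_monic _ _) hI3 hG (Ne.symm e13)) hd3')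
    obtain ⟨K3, hK3⟩ := h3
    have hd4' : G4 ∣ G1 * (G2 * (G3 * K3)) := by
      rw [← hK3, ← hK2, ← hK1]; exact hd4
    have h4 : G4 ∣ K3 :=
      dvd_cancel (prime_of_irr hI4)
        (not_dvd_of_ne (q2_monic _ _) (q2_monic _ _) hI4 hI3 (Ne.symm e34))
        (dvd_cancel (prime_of_irr hI4)
          (not_dvd_of_ne (q2_monic _ _) (q2_monic _ _) hI4 hI2 (Ne.symm e24))
          (dvd_cancel (prime_of_irr hI4)
            (not_dvd_of_ne (q2_monic _ _) (q2_monic _ _) hI4 hG (Ne.symm e14)) hd4'))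
    obtain ⟨K4, hK4⟩ := h4
    have hFP : FP = G1 * (G2 * (G3 * G4)) := by
      apply monic_dvd_eq
      · exact ((q2_monic _ _).mul (((q2_monic _ _).mul ((q2_monic _ _).mul (q2_monic _ _)))))
      · rw [Polynomial.natDegree_mul (q2_monic _ _).ne_zero
          (mul_ne_zero (q2_monic _ _).ne_zero
            (mul_ne_zero (q2_monic _ _).ne_zero (q2_monic _ _).ne_zero)),
          Polynomial.natDegree_mul (q2_monic _ _).ne_zero
            (mul_ne_zero (q2_monic _ _).ne_zero (q2_monic _ _).ne_zero),
          Polynomial.natDegree_mul (q2_monic _ _).ne_zero (q2_monic _ _).ne_zero]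
        simp [q2_natDegree]
      · exact ⟨K4, by rw [hK1, hK2, hK3, hK4]; ring⟩
    have hcoeff := congrArg (fun p => Polynomial.coeff p 0) hFP
    simp only [FP_coeff0, Polynomial.mul_coeff_zero, hG1, hG2, hG3, hG4, q2_coeff0] at hcoeff
    exact not_sq_bP (c0 * c0) (by linear_combination -hcoeff)

lemma not_unit_X2_add (c : R) : ¬ IsUnit (Polynomial.X ^ 2 + Polynomial.C c : S) := by
  intro h
  have hd := Polynomial.natDegree_eq_zero_of_isUnit h
  have h2 : (Polynomial.X ^ 2 + Polynomial.C c : S).natDegree = 2 := by compute_degree!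
  omega

lemma case3 (c2 c1 c0 : R) (hG : Irreducible (q3 c2 c1 c0)) (hdvd : q3 c2 c1 c0 ∣ FP) :
    False := by
  set G1 := q3 c2 c1 c0 with hG1
  set G2 := q3 (-(cI * c2)) (-c1) (cI * c0) with hG2
  set G3 := q3 (-c2) c1 (-c0) with hG3
  have hunit : IsUnit (Polynomial.C cI : S) := by
    apply Polynomial.isUnit_C.mpr
    unfold cI
    exact Polynomial.isUnit_C.mpr (Ne.isUnit Complex.I_ne_zero)
  have hsg1 : Polynomial.C cI * sg G1 = G2 := sg_q3 c2 c1 c0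
  have hsg2 : Polynomial.C cI * sg G2 = G3 := by
    have hs := sg_q3 (-(cI * c2)) (-c1) (cI * c0)
    rw [hG2, hs, hG3]
    have h1 : -(cI * -(cI * c2)) = -c2 := by linear_combination c2 * hcI2
    have h2 : cI * (cI * c0) = -c0 := by linear_combination c0 * hcI2
    rw [h1, h2, neg_neg]
  have hAssoc1 : Associated (sg G1) G2 := by
    refine ⟨hunit.unit, ?_⟩
    rw [← hsg1, mul_comm]
    rfl
  have hAssoc2 : Associated (sg G2) G3 := by
    refine ⟨hunit.unit, ?_⟩
    rw [← hsg2, mul_comm]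
    rfl
  have hI2 : Irreducible G2 := hAssoc1.irreducible (irr_sg hG)
  have hI3 : Irreducible G3 := hAssoc2.irreducible (irr_sg hI2)
  have hd2 : G2 ∣ FP := by
    rw [← hsg1]
    exact (IsUnit.mul_left_dvd hunit).mpr (dvd_sg hdvd)
  have hd3 : G3 ∣ FP := by
    rw [← hsg2]
    exact (IsUnit.mul_left_dvd hunit).mpr (dvd_sg hd2)
  -- if G1 degenerates, it is reducible
  have hnontriv : ¬ (c2 = 0 ∧ c0 = 0) := by
    rintro ⟨rfl, rfl⟩
    have hfac : G1 = Polynomial.X * (Polynomial.X ^ 2 + Polynomial.C c1) := by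
      rw [hG1]; unfold q3; simp; ring
    rcases hG.isUnit_or_isUnit hfac with h | h
    · exact Polynomial.not_isUnit_X h
    · exact not_unit_X2_add c1 h
  have e12 : G1 ≠ G2 := by
    intro h
    obtain ⟨h2, h1, h0⟩ := q3_inj h
    apply hnontriv
    constructor
    · apply cfac one_add_I_ne (c := c2)
      unfold cI at h2
      rw [_root_.map_add, _root_.map_one]
      linear_combination h2
    · apply cfac one_sub_I_ne (c := c0)
      unfold cI at h0
      rw [_root_.map_sub, _root_.map_one]
      linear_combination h0
  have e13 : G1 ≠ G3 := by
    intro h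
    obtain ⟨h2, h1, h0⟩ := q3_inj h
    apply hnontriv
    constructor
    · apply cfac (two_ne_zero (α := ℂ)) (c := c2)
      rw [_root_.map_ofNat]
      linear_combination h2
    · apply cfac (two_ne_zero (α := ℂ)) (c := c0)
      rw [_root_.map_ofNat]
      linear_combination h0
  have e23 : G2 ≠ G3 := by
    intro h
    obtain ⟨h2, h1, h0⟩ := q3_inj h
    apply hnontriv
    constructor
    · apply cfac one_sub_I_ne (c := c2)
      unfold cI at h2
      rw [_root_.map_sub, _root_.map_one]
      linear_combination h2
    · apply cfac one_add_I_ne (c := c0)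
      unfold cI at h0
      rw [_root_.map_add, _root_.map_one]
      linear_combination h0
  obtain ⟨K1, hK1⟩ := hdvd
  have h2 : G2 ∣ K1 := by
    apply dvd_cancel (prime_of_irr hI2)
      (not_dvd_of_ne (q3_monic _ _ _) (q3_monic _ _ _) hI2 hG (Ne.symm e12))
    rw [← hK1]; exact hd2
  obtain ⟨K2, hK2⟩ := h2
  have hd3' : G3 ∣ G1 * (G2 * K2) := by
    rw [← hK2, ← hK1]; exact hd3
  have h3 : G3 ∣ K2 :=
    dvd_cancel (prime_of_irr hI3)
      (not_dvd_of_ne (q3_monic _ _ _) (q3_monic _ _ _) hI3 hI2 (Ne.symm e23))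
      (dvd_cancel (prime_of_irr hI3)
        (not_dvd_of_ne (q3_monic _ _ _) (q3_monic _ _ _) hI3 hG (Ne.symm e13)) hd3')
  obtain ⟨K3, hK3⟩ := h3
  have hprod : G1 * (G2 * G3) ∣ FP := ⟨K3, by rw [hK1, hK2, hK3]; ring⟩
  have hle := Polynomial.natDegree_le_of_dvd hprod FP_ne_zero
  rw [Polynomial.natDegree_mul (q3_monic _ _ _).ne_zero
      (mul_ne_zero (q3_monic _ _ _).ne_zero (q3_monic _ _ _).ne_zero),
    Polynomial.natDegree_mul (q3_monic _ _ _).ne_zero (q3_monic _ _ _).ne_zero,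
    FP_natDegree] at hle
  simp [q3_natDegree] at hle

lemma case4 (c3 c2 c1 c0 : R) (hG : Irreducible (q4 c3 c2 c1 c0)) (hdvd : q4 c3 c2 c1 c0 ∣ FP) :
    False := by
  set G1 := q4 c3 c2 c1 c0 with hG1
  set G2 := q4 (-(cI * c3)) (-c2) (cI * c1) c0 with hG2
  have hsg1 : sg G1 = G2 := sg_q4 c3 c2 c1 c0
  have hI2 : Irreducible G2 := by rw [← hsg1]; exact irr_sg hG
  have hd2 : G2 ∣ FP := by rw [← hsg1]; exact dvd_sg hdvd
  by_cases h12 : G1 = G2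
  · -- invariant quartic: G1 = X⁴ + c0
    obtain ⟨h3, h2, h1, _⟩ := q4_inj h12
    have hc3 : c3 = 0 := by
      apply cfac one_add_I_ne (c := c3)
      unfold cI at h3
      rw [_root_.map_add, _root_.map_one]
      linear_combination h3
    have hc2 : c2 = 0 := by
      apply cfac (two_ne_zero (α := ℂ)) (c := c2)
      rw [_root_.map_ofNat]
      linear_combination h2
    have hc1 : c1 = 0 := by
      apply cfac one_sub_I_ne (c := c1)
      unfold cI at h1
      rw [_root_.map_sub, _root_.map_one]
      linear_combination h1
    have hform : G1 = Polynomial.X ^ 4 + Polynomial.C c0 := by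
      rw [hG1, hc3, hc2, hc1]; unfold q4; simp
    rw [hform] at hdvd
    exact X4_dvd_contra c0 hdvd
  · -- G1 ≠ G2 : FP = G1 * G2, so b = c0²
    have hprod : G1 * G2 ∣ FP := by
      obtain ⟨K, hK⟩ := hdvd
      have h2 : G2 ∣ K := by
        apply dvd_cancel (prime_of_irr hI2)
          (not_dvd_of_ne (q4_monic _ _ _ _) (q4_monic _ _ _ _) hI2 hG (Ne.symm h12))
        rw [← hK]; exact hd2
      obtain ⟨L, hL⟩ := h2
      exact ⟨L, by rw [hK, hL, mul_assoc]⟩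
    have hFP : FP = G1 * G2 := by
      apply monic_dvd_eq ((q4_monic _ _ _ _).mul (q4_monic _ _ _ _))
      · rw [Polynomial.natDegree_mul (q4_monic _ _ _ _).ne_zero (q4_monic _ _ _ _).ne_zero]
        simp [q4_natDegree]
      · exact hprod
    have hcoeff := congrArg (fun p => Polynomial.coeff p 0) hFP
    simp only [FP_coeff0, Polynomial.mul_coeff_zero, hG1, hG2, q4_coeff0] at hcoeff
    exact not_sq_bP c0 hcoeff.symm

/-! ### irreducibility of the specialized polynomial -/

theorem FP_irred : Irreducible FP := by
  constructor
  · intro hu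
    have h0 := Polynomial.natDegree_eq_zero_of_isUnit hu
    rw [FP_natDegree] at h0
    omega
  · intro P Q hPQ
    by_contra hcon
    push_neg at hcon
    obtain ⟨hPu, hQu⟩ := hcon
    have hP0 : P ≠ 0 := by
      rintro rfl
      rw [zero_mul] at hPQ
      exact FP_ne_zero hPQ
    have hQ0 : Q ≠ 0 := by
      rintro rfl
      rw [mul_zero] at hPQ
      exact FP_ne_zero hPQ
    have hlc : P.leadingCoeff * Q.leadingCoeff = 1 := by
      rw [← Polynomial.leadingCoeff_mul, ← hPQ]
      exact FP_monic
    have hdegsum : P.natDegree + Q.natDegree = 8 := by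
      rw [← Polynomial.natDegree_mul hP0 hQ0, ← hPQ, FP_natDegree]
    have hdegP : P.natDegree ≠ 0 := by
      intro h0
      apply hPu
      rw [Polynomial.eq_C_of_natDegree_eq_zero h0]
      apply Polynomial.isUnit_C.mpr
      have hc : P.coeff 0 = P.leadingCoeff := by
        unfold Polynomial.leadingCoeff
        rw [h0]
      rw [hc]
      exact IsUnit.of_mul_eq_one _ hlc
    have hdegQ : Q.natDegree ≠ 0 := by
      intro h0
      apply hQu
      rw [Polynomial.eq_C_of_natDegree_eq_zero h0]
      apply Polynomial.isUnit_C.mpr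
      have hc : Q.coeff 0 = Q.leadingCoeff := by
        unfold Polynomial.leadingCoeff
        rw [h0]
      rw [hc]
      exact IsUnit.of_mul_eq_one _ (by rw [mul_comm]; exact hlc)
    have hsmall : ∃ W : S, W ∣ FP ∧ ¬ IsUnit W ∧ W ≠ 0 ∧ 1 ≤ W.natDegree ∧ W.natDegree ≤ 4 := by
      rcases le_or_gt P.natDegree 4 with h | h
      · exact ⟨P, ⟨Q, hPQ⟩, hPu, hP0, by omega, h⟩
      · exact ⟨Q, ⟨P, by rw [hPQ, mul_comm]⟩, hQu, hQ0, by omega, by omega⟩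
    obtain ⟨W, hWdvd, hWu, hW0, hW1, hW4⟩ := hsmall
    obtain ⟨G0, hG0irr, hG0dvd⟩ := WfDvdMonoid.exists_irreducible_factor hWu hW0
    have hG0dF : G0 ∣ FP := hG0dvd.trans hWdvd
    obtain ⟨K, hK⟩ := hG0dF
    have hG00 : G0 ≠ 0 := by
      rintro rfl
      rw [zero_mul] at hK
      exact FP_ne_zero hK
    have hK0 : K ≠ 0 := by
      rintro rfl
      rw [mul_zero] at hK
      exact FP_ne_zero hK
    have hlcG : G0.leadingCoeff * K.leadingCoeff = 1 := by
      rw [← Polynomial.leadingCoeff_mul, ← hK]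
      exact FP_monic
    have hKlcu : IsUnit K.leadingCoeff :=
      IsUnit.of_mul_eq_one _ (by rw [mul_comm]; exact hlcG)
    set G := Polynomial.C K.leadingCoeff * G0 with hGdef
    have hGm : G.Monic := by
      unfold Polynomial.Monic
      rw [hGdef, Polynomial.leadingCoeff_mul, Polynomial.leadingCoeff_C, mul_comm]
      exact hlcG
    have hGassoc : Associated G0 G := by
      refine ⟨(Polynomial.isUnit_C.mpr hKlcu).unit, ?_⟩
      rw [mul_comm]
      rfl
    have hGirr : Irreducible G := hGassoc.irreducible hG0irr
    have hGdvd : G ∣ FP := (hGassoc.symm.dvd).trans (hG0dvd.trans hWdvd)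
    have hGdeg_le : G.natDegree ≤ 4 := by
      rw [hGdef, Polynomial.natDegree_C_mul hKlcu.ne_zero]
      exact (Polynomial.natDegree_le_of_dvd hG0dvd hW0).trans hW4
    have hGdeg_ne : G.natDegree ≠ 0 := by
      intro h0
      apply hGirr.not_isUnit
      rw [Polynomial.eq_C_of_natDegree_eq_zero h0]
      apply Polynomial.isUnit_C.mpr
      have hc : G.coeff 0 = G.leadingCoeff := by
        unfold Polynomial.leadingCoeff
        rw [h0]
      rw [hc, hGm.leadingCoeff]
      exact isUnit_one
    have hcases : G.natDegree = 1 ∨ G.natDegree = 2 ∨ G.natDegree = 3 ∨ G.natDegree = 4 := by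
      omega
    rcases hcases with h | h | h | h
    · have hform := hGm.eq_X_add_C h
      rw [hform] at hGdvd
      exact case1 _ hGdvd
    · have hform := repr2 hGm h
      rw [hform] at hGirr hGdvd
      exact case2 _ _ hGirr hGdvd
    · have hform := repr3 hGm h
      rw [hform] at hGirr hGdvd
      exact case3 _ _ _ hGirr hGdvd
    · have hform := repr4 hGm h
      rw [hform] at hGirr hGdvd
      exact case4 _ _ _ _ hGirr hGdvd

/-! ### transfer to the multivariate polynomial -/

local notation "R3" => MvPolynomial (Fin 3) ℂ

/-- `maschkeF`, written as a polynomial in its first variable. -/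
def F3 : Polynomial R3 :=
  Polynomial.X ^ 8
    + (Polynomial.C (14 * (MvPolynomial.X 0 ^ 4 + MvPolynomial.X 1 ^ 4 + MvPolynomial.X 2 ^ 4))
        * Polynomial.X ^ 4
      + Polynomial.C (168 * (MvPolynomial.X 0 ^ 2 * MvPolynomial.X 1 ^ 2 * MvPolynomial.X 2 ^ 2))
        * Polynomial.X ^ 2
      + Polynomial.C (MvPolynomial.X 0 ^ 8 + MvPolynomial.X 1 ^ 8 + MvPolynomial.X 2 ^ 8
          + 14 * (MvPolynomial.X 0 ^ 4 * MvPolynomial.X 1 ^ 4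
            + MvPolynomial.X 0 ^ 4 * MvPolynomial.X 2 ^ 4
            + MvPolynomial.X 1 ^ 4 * MvPolynomial.X 2 ^ 4)))

lemma finSuccEquiv_maschkeF : MvPolynomial.finSuccEquiv ℂ 3 maschkeF = F3 := by
  have h1 : (1 : Fin 4) = Fin.succ 0 := rfl
  have h2 : (2 : Fin 4) = Fin.succ 1 := rfl
  have h3 : (3 : Fin 4) = Fin.succ 2 := rfl
  rw [maschkeF, h1, h2, h3]
  simp only [_root_.map_add, _root_.map_mul, _root_.map_pow, _root_.map_ofNat, MvPolynomial.finSuccEquiv_X_zero,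
    MvPolynomial.finSuccEquiv_X_succ]
  unfold F3
  simp only [_root_.map_add, _root_.map_mul, _root_.map_pow, _root_.map_ofNat, _root_.map_one]
  ring

lemma F3_monic : F3.Monic := by
  have h : Polynomial.degree
      ((Polynomial.C (14 * (MvPolynomial.X 0 ^ 4 + MvPolynomial.X 1 ^ 4 + MvPolynomial.X 2 ^ 4))
        * Polynomial.X ^ 4
      + Polynomial.C (168 * (MvPolynomial.X 0 ^ 2 * MvPolynomial.X 1 ^ 2 * MvPolynomial.X 2 ^ 2))
        * Polynomial.X ^ 2
      + Polynomial.C (MvPolynomial.X 0 ^ 8 + MvPolynomial.X 1 ^ 8 + MvPolynomial.X 2 ^ 8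
          + 14 * (MvPolynomial.X 0 ^ 4 * MvPolynomial.X 1 ^ 4
            + MvPolynomial.X 0 ^ 4 * MvPolynomial.X 2 ^ 4
            + MvPolynomial.X 1 ^ 4 * MvPolynomial.X 2 ^ 4))) : Polynomial R3) < 8 := by
    apply lt_of_le_of_lt (Polynomial.degree_add_le _ _)
    apply max_lt
    · apply lt_of_le_of_lt (Polynomial.degree_add_le _ _)
      apply max_lt
      · apply lt_of_le_of_lt (Polynomial.degree_C_mul_X_pow_le 4 _)
        norm_num
      · apply lt_of_le_of_lt (Polynomial.degree_C_mul_X_pow_le 2 _)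
        norm_num
    · apply lt_of_le_of_lt Polynomial.degree_C_le
      norm_num
  exact Polynomial.monic_X_pow_add (n := 8) h

/-- the specialization `x ↦ u, y ↦ 1, z ↦ 0`. -/
def ψ : R3 →ₐ[ℂ] R := MvPolynomial.aeval ![Polynomial.X, 1, 0]

lemma map_F3 : F3.map (ψ.toRingHom : R3 →+* R) = FP := by
  have e0 : (![Polynomial.X, 1, 0] : Fin 3 → R) 0 = Polynomial.X := rfl
  have e1 : (![Polynomial.X, 1, 0] : Fin 3 → R) 1 = 1 := rfl
  have e2 : (![Polynomial.X, 1, 0] : Fin 3 → R) 2 = 0 := rfl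
  unfold F3 FP
  simp only [Polynomial.map_add, Polynomial.map_mul, Polynomial.map_pow, Polynomial.map_C,
    Polynomial.map_X, AlgHom.toRingHom_eq_coe, RingHom.coe_coe]
  unfold ψ
  simp only [_root_.map_add, _root_.map_mul, _root_.map_pow, _root_.map_ofNat,
    _root_.map_one, _root_.map_zero, MvPolynomial.aeval_X, e0, e1, e2]
  unfold aP bP
  simp only [_root_.map_add, _root_.map_mul, _root_.map_pow, _root_.map_ofNat, _root_.map_one]
  ring

theorem F3_irred : Irreducible F3 := by
  apply Polynomial.Monic.irreducible_of_irreducible_map (ψ.toRingHom : R3 →+* R) F3 F3_monic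
  rw [map_F3]
  exact FP_irred

end

end MaschkeAux

/-- The Maschke polynomial `f` is irreducible in `ℂ[x,y,z,t]`. -/
theorem maschkeF_irreducible : Irreducible maschkeF := by
  have h := MaschkeAux.F3_irred
  rw [← MaschkeAux.finSuccEquiv_maschkeF] at h
  exact (MulEquiv.irreducible_iff (MvPolynomial.finSuccEquiv ℂ 3)).mp h
end

section
/- The line L₁₆₀ is contained in the Maschke octic: every point (x,y,z,t) ∈ ℂ⁴ satisfying 2x + (i+1)(√3+1)y = 0 and 2z + (i+1)(√3+1)t = 0 satisfies f(x,y,z,t) = 0. -/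
open Matrix MvPolynomial

/-- The line `L₁₆₀` is contained in the Maschke octic. -/
theorem L160_subset_maschke (r3 : ℂ) (hr3 : r3 ^ 2 = 3) (v : Fin 4 → ℂ)
    (h1 : 2 * v 0 + (Complex.I + 1) * (r3 + 1) * v 1 = 0)
    (h2 : 2 * v 2 + (Complex.I + 1) * (r3 + 1) * v 3 = 0) :
    MvPolynomial.eval v maschkeF = 0 := by
  set c : ℂ := (Complex.I + 1) * (r3 + 1) with hc
  have hk4 : c ^ 4 = -16 * (7 + 4 * r3) := by
    rw [hc]
    linear_combination ((r3 + 1) ^ 4 * (Complex.I ^ 2 + 4 * Complex.I + 5)) * Complex.I_sq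
      + (-4 * (r3 ^ 2 + 4 * r3 + 9)) * hr3
  have hx : v 0 = -(c / 2) * v 1 := by linear_combination h1 / 2
  have hz : v 2 = -(c / 2) * v 3 := by linear_combination h2 / 2
  simp only [maschkeF, map_add, _root_.map_mul, map_pow, eval_X, map_ofNat]
  rw [hx, hz]
  linear_combination ((7 / 16 : ℂ) * (v 3 ^ 8 + v 1 ^ 8) + 49 / 8 * v 1 ^ 4 * v 3 ^ 4
      - r3 / 4 * (v 3 ^ 8 + v 1 ^ 8) - 7 * r3 / 2 * v 1 ^ 4 * v 3 ^ 4
      + c ^ 4 / 256 * (v 3 ^ 8 + v 1 ^ 8) + 7 * c ^ 4 / 128 * v 1 ^ 4 * v 3 ^ 4) * hk4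
    + ((16 : ℂ) * (v 3 ^ 8 + v 1 ^ 8) + 224 * v 1 ^ 4 * v 3 ^ 4) * hr3
end

section
/- The natural action of G₃₁ on ℂ⁴ is irreducible: the only linear subspaces W ⊆ ℂ⁴ satisfying sₖ W ⊆ W for all k ∈ {1,2,3,4,5} are W = {0} and W = ℂ⁴. -/
open Matrix MvPolynomial

/-- The reflection `s₁`: permutation matrix swapping the first two basis vectors. -/
noncomputable def s1 : Matrix (Fin 4) (Fin 4) ℂ := !![0,1,0,0; 1,0,0,0; 0,0,1,0; 0,0,0,1]

/-- The reflection `s₂`: permutation matrix swapping the second and third basis vectors. -/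
noncomputable def s2 : Matrix (Fin 4) (Fin 4) ℂ := !![1,0,0,0; 0,0,1,0; 0,1,0,0; 0,0,0,1]

/-- The reflection `s₃`. -/
noncomputable def s3 : Matrix (Fin 4) (Fin 4) ℂ :=
  !![0,-Complex.I,0,0; Complex.I,0,0,0; 0,0,1,0; 0,0,0,1]

/-- The reflection `s₄`. -/
noncomputable def s4 : Matrix (Fin 4) (Fin 4) ℂ :=
  ((1 : ℂ)/2) • !![1,-1,-1,-1; -1,1,-1,-1; -1,-1,1,-1; -1,-1,-1,1]

/-- The reflection `s₅ = diag(−1,1,1,1)`. -/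
noncomputable def s5 : Matrix (Fin 4) (Fin 4) ℂ := !![-1,0,0,0; 0,1,0,0; 0,0,1,0; 0,0,0,1]

/-- The action of `G₃₁` on `ℂ⁴` is irreducible: a linear subspace stable under
all five generating reflections is `{0}` or `ℂ⁴`. -/
theorem G31_irreducible (W : Submodule ℂ (Fin 4 → ℂ))
    (hW : ∀ s ∈ ({s1, s2, s3, s4, s5} : Set (Matrix (Fin 4) (Fin 4) ℂ)),
      W.map s.mulVecLin ≤ W) :
    W = ⊥ ∨ W = ⊤ := by
  rcases eq_or_ne W ⊥ with h | h
  · exact Or.inl h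
  right
  have h1 : ∀ v ∈ W, s1.mulVec v ∈ W := fun v hv => by
    simpa using hW s1 (by simp) (Submodule.mem_map_of_mem hv)
  have h2 : ∀ v ∈ W, s2.mulVec v ∈ W := fun v hv => by
    simpa using hW s2 (by simp) (Submodule.mem_map_of_mem hv)
  have h4 : ∀ v ∈ W, s4.mulVec v ∈ W := fun v hv => by
    simpa using hW s4 (by simp) (Submodule.mem_map_of_mem hv)
  have h5 : ∀ v ∈ W, s5.mulVec v ∈ W := fun v hv => by
    simpa using hW s5 (by simp) (Submodule.mem_map_of_mem hv)
  obtain ⟨w, hwW, hw0⟩ := (Submodule.ne_bot_iff W).mp h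
  -- Step A: produce v ∈ W with v 0 ≠ 0
  have stepA : ∃ v ∈ W, v 0 ≠ 0 := by
    by_cases c0 : w 0 ≠ 0
    · exact ⟨w, hwW, c0⟩
    push_neg at c0
    by_cases c1 : w 1 ≠ 0
    · refine ⟨s1.mulVec w, h1 w hwW, ?_⟩
      simp [s1, Matrix.mulVec, dotProduct, Fin.sum_univ_four, c1]
    push_neg at c1
    by_cases c2 : w 2 ≠ 0
    · refine ⟨s1.mulVec (s2.mulVec w), h1 _ (h2 w hwW), ?_⟩
      simp [s1, s2, Matrix.mulVec, dotProduct, Fin.sum_univ_four, c2]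
    push_neg at c2
    have c3 : w 3 ≠ 0 := by
      intro c3
      apply hw0
      funext i
      fin_cases i <;> simp [c0, c1, c2, c3]
    refine ⟨s4.mulVec w, h4 w hwW, ?_⟩
    simp [s4, Matrix.mulVec, dotProduct, Fin.sum_univ_four, c0, c1, c2]
    simpa using c3
  obtain ⟨v, hvW, hv0⟩ := stepA
  -- e0 ∈ W
  have he0 : (![1,0,0,0] : Fin 4 → ℂ) ∈ W := by
    have hsub : v - s5.mulVec v ∈ W := W.sub_mem hvW (h5 v hvW)
    have heq : (![1,0,0,0] : Fin 4 → ℂ) = (2 * v 0)⁻¹ • (v - s5.mulVec v) := by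
      funext i
      fin_cases i <;>
        simp [s5, Matrix.mulVec, dotProduct, Fin.sum_univ_four,
          Matrix.vecHead, Matrix.vecTail, show (Fin.succ 2 : Fin 4) = 3 from rfl,
          show (Fin.succ 1 : Fin 3) = 2 from rfl, show (Fin.succ 0 : Fin 2) = 1 from rfl]
      field_simp
      ring
    rw [heq]
    exact W.smul_mem _ hsub
  have he1 : (![0,1,0,0] : Fin 4 → ℂ) ∈ W := by
    have := h1 _ he0
    have heq : s1.mulVec ![1,0,0,0] = (![0,1,0,0] : Fin 4 → ℂ) := by
      funext i
      fin_cases i <;> simp [s1, Matrix.mulVec, dotProduct, Fin.sum_univ_four]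
    rwa [heq] at this
  have he2 : (![0,0,1,0] : Fin 4 → ℂ) ∈ W := by
    have := h2 _ he1
    have heq : s2.mulVec ![0,1,0,0] = (![0,0,1,0] : Fin 4 → ℂ) := by
      funext i
      fin_cases i <;> simp [s2, Matrix.mulVec, dotProduct, Fin.sum_univ_four]
    rwa [heq] at this
  have he3 : (![0,0,0,1] : Fin 4 → ℂ) ∈ W := by
    have hm : ![1,0,0,0] - ![0,1,0,0] - ![0,0,1,0] - (2:ℂ) • s4.mulVec ![1,0,0,0] ∈ W :=
      W.sub_mem (W.sub_mem (W.sub_mem he0 he1) he2) (W.smul_mem _ (h4 _ he0))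
    have heq : (![0,0,0,1] : Fin 4 → ℂ)
        = ![1,0,0,0] - ![0,1,0,0] - ![0,0,1,0] - (2:ℂ) • s4.mulVec ![1,0,0,0] := by
      funext i
      fin_cases i <;>
        simp [s4, Matrix.mulVec, dotProduct, Fin.sum_univ_four, Matrix.vecHead, Matrix.vecTail]
    rwa [heq]
  rw [Submodule.eq_top_iff']
  intro x
  have hx : x = x 0 • ![1,0,0,0] + x 1 • ![0,1,0,0] + x 2 • ![0,0,1,0] + x 3 • ![0,0,0,1] := by
    funext i
    fin_cases i <;> simp
  rw [hx]
  exact W.add_mem (W.add_mem (W.add_mem (W.smul_mem _ he0) (W.smul_mem _ he1))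
    (W.smul_mem _ he2)) (W.smul_mem _ he3)
end

section
/- The polynomial f is invariant under G₃₁: for each k ∈ {1,2,3,4,5}, the polynomial obtained from f by the linear substitution of variables given by the matrix sₖ (i.e., the pullback of f along v ↦ sₖ v) equals f. -/
open Matrix MvPolynomial

/-- `f` is invariant under each of the five generating reflections of `G₃₁`:
the pullback of `f` along `v ↦ s v` equals `f`. -/
theorem maschkeF_invariant :
    ∀ s ∈ ({s1, s2, s3, s4, s5} : Set (Matrix (Fin 4) (Fin 4) ℂ)),
      MvPolynomial.aeval
        (fun j : Fin 4 => ∑ k : Fin 4, MvPolynomial.C (s j k) * X k) maschkeF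
        = maschkeF := by
  have eval_aeval' : ∀ (f : Fin 4 → MvPolynomial (Fin 4) ℂ) (g : Fin 4 → ℂ)
      (p : MvPolynomial (Fin 4) ℂ),
      eval g (MvPolynomial.aeval f p) = eval (fun i => eval g (f i)) p := by
    intro f g p
    rw [MvPolynomial.aeval_def, MvPolynomial.algebraMap_eq, ← MvPolynomial.eval_assoc]
    rfl
  intro s hs
  apply MvPolynomial.funext
  intro x
  rw [eval_aeval']
  simp only [map_sum, _root_.map_mul, eval_C, eval_X, Fin.sum_univ_four]
  simp only [Set.mem_insert_iff, Set.mem_singleton_iff] at hs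
  rcases hs with h|h|h|h|h <;> subst h <;>
    simp [maschkeF, s1, s2, s3, s4, s5, Matrix.vecHead, Matrix.vecTail]
  · ring
  · ring
  · have h4 : Complex.I ^ 4 = 1 := by
      rw [show Complex.I ^ 4 = (Complex.I ^ 2) ^ 2 by ring, Complex.I_sq]; ring
    have h8 : Complex.I ^ 8 = 1 := by
      rw [show Complex.I ^ 8 = (Complex.I ^ 4) ^ 2 by ring, h4]; ring
    ring_nf
    simp only [h4, h8, one_mul]
    ring
  · ring
  · ring
end

section
/- The matrices a and b belong to G₃₁, i.e., a and b lie in the subgroup of GL₄(ℂ) generated by s₁, s₂, s₃, s₄, s₅. -/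
open Matrix MvPolynomial

lemma s1_sq : s1 * s1 = 1 := by
  ext i j
  fin_cases i <;> fin_cases j <;>
    simp [s1, Matrix.mul_apply, Fin.sum_univ_four, Matrix.one_apply] <;>
    norm_num

lemma s2_sq : s2 * s2 = 1 := by
  ext i j
  fin_cases i <;> fin_cases j <;>
    simp [s2, Matrix.mul_apply, Fin.sum_univ_four, Matrix.one_apply] <;>
    norm_num

lemma s3_sq : s3 * s3 = 1 := by
  ext i j
  fin_cases i <;> fin_cases j <;>
    simp [s3, Matrix.mul_apply, Fin.sum_univ_four, Matrix.one_apply] <;>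
    norm_num

lemma s4_sq : s4 * s4 = 1 := by
  ext i j
  fin_cases i <;> fin_cases j <;>
    simp [s4, Matrix.mul_apply, Fin.sum_univ_four, Matrix.one_apply] <;>
    norm_num

lemma s5_sq : s5 * s5 = 1 := by
  ext i j
  fin_cases i <;> fin_cases j <;>
    simp [s5, Matrix.mul_apply, Fin.sum_univ_four, Matrix.one_apply] <;>
    norm_num

/-- `s₁` as an element of `GL₄(ℂ)`. -/
noncomputable def S1 : GL (Fin 4) ℂ := ⟨s1, s1, s1_sq, s1_sq⟩
/-- `s₂` as an element of `GL₄(ℂ)`. -/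
noncomputable def S2 : GL (Fin 4) ℂ := ⟨s2, s2, s2_sq, s2_sq⟩
/-- `s₃` as an element of `GL₄(ℂ)`. -/
noncomputable def S3 : GL (Fin 4) ℂ := ⟨s3, s3, s3_sq, s3_sq⟩
/-- `s₄` as an element of `GL₄(ℂ)`. -/
noncomputable def S4 : GL (Fin 4) ℂ := ⟨s4, s4, s4_sq, s4_sq⟩
/-- `s₅` as an element of `GL₄(ℂ)`. -/
noncomputable def S5 : GL (Fin 4) ℂ := ⟨s5, s5, s5_sq, s5_sq⟩

/-- The Shephard–Todd group `G₃₁`, generated by the five reflections. -/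
noncomputable def G31 : Subgroup (GL (Fin 4) ℂ) := Subgroup.closure {S1, S2, S3, S4, S5}

/-- The matrix `a = ((1−i)/2)·B`. -/
noncomputable def aMat : Matrix (Fin 4) (Fin 4) ℂ :=
  ((1 - Complex.I)/2) • !![1,0,0,1; 0,1,1,0; 0,-1,1,0; 1,0,0,-1]

noncomputable def aMatInv : Matrix (Fin 4) (Fin 4) ℂ :=
  ((1 + Complex.I)/2) • !![1,0,0,1; 0,1,-1,0; 0,1,1,0; 1,0,0,-1]

/-- The matrix `b`. -/
noncomputable def bMat : Matrix (Fin 4) (Fin 4) ℂ :=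
  !![0,0,-1,0; -1,0,0,0; 0,1,0,0; 0,0,0,1]

noncomputable def bMatInv : Matrix (Fin 4) (Fin 4) ℂ :=
  !![0,-1,0,0; 0,0,1,0; -1,0,0,0; 0,0,0,1]

lemma aMat_mul_inv : aMat * aMatInv = 1 := by
  ext i j
  fin_cases i <;> fin_cases j <;>
    simp [aMat, aMatInv, Matrix.mul_apply, Fin.sum_univ_four, Matrix.one_apply] <;>
    norm_num [Complex.ext_iff]

lemma aMat_inv_mul : aMatInv * aMat = 1 := by
  ext i j
  fin_cases i <;> fin_cases j <;>
    simp [aMat, aMatInv, Matrix.mul_apply, Fin.sum_univ_four, Matrix.one_apply] <;>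
    norm_num [Complex.ext_iff]

lemma bMat_mul_inv : bMat * bMatInv = 1 := by
  ext i j
  fin_cases i <;> fin_cases j <;>
    simp [bMat, bMatInv, Matrix.mul_apply, Fin.sum_univ_four, Matrix.one_apply] <;>
    norm_num

lemma bMat_inv_mul : bMatInv * bMat = 1 := by
  ext i j
  fin_cases i <;> fin_cases j <;>
    simp [bMat, bMatInv, Matrix.mul_apply, Fin.sum_univ_four, Matrix.one_apply] <;>
    norm_num

/-- `a` as an element of `GL₄(ℂ)`. -/
noncomputable def aGL : GL (Fin 4) ℂ := ⟨aMat, aMatInv, aMat_mul_inv, aMat_inv_mul⟩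

/-- `b` as an element of `GL₄(ℂ)`. -/
noncomputable def bGL : GL (Fin 4) ℂ := ⟨bMat, bMatInv, bMat_mul_inv, bMat_inv_mul⟩

noncomputable def p0 : Matrix (Fin 4) (Fin 4) ℂ := s4
noncomputable def p1 : Matrix (Fin 4) (Fin 4) ℂ := !![(-1/2), (-1/2), (-1/2), (-1/2); (1/2), (1/2), (-1/2), (-1/2); (1/2), (-1/2), (1/2), (-1/2); (1/2), (-1/2), (-1/2), (1/2)]
lemma hp1 : p0 * s5 = p1 := by
  ext i j
  fin_cases i <;> fin_cases j <;>
    norm_num [p0, s4, s5, p1, Matrix.mul_apply, Fin.sum_univ_four,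
      Matrix.cons_val_two, Matrix.cons_val_three, Matrix.vecHead, Matrix.vecTail, Complex.ext_iff]
noncomputable def p2 : Matrix (Fin 4) (Fin 4) ℂ := !![(1/2), (1/2), (1/2), (1/2); (1/2), (1/2), (-1/2), (-1/2); (1/2), (-1/2), (1/2), (-1/2); (1/2), (-1/2), (-1/2), (1/2)]
lemma hp2 : p1 * s4 = p2 := by
  ext i j
  fin_cases i <;> fin_cases j <;>
    norm_num [p1, s4, p2, Matrix.mul_apply, Fin.sum_univ_four,
      Matrix.cons_val_two, Matrix.cons_val_three, Matrix.vecHead, Matrix.vecTail, Complex.ext_iff]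
noncomputable def p3 : Matrix (Fin 4) (Fin 4) ℂ := !![(1/2)*Complex.I, (-1/2)*Complex.I, (1/2), (1/2); (1/2)*Complex.I, (-1/2)*Complex.I, (-1/2), (-1/2); (-1/2)*Complex.I, (-1/2)*Complex.I, (1/2), (-1/2); (-1/2)*Complex.I, (-1/2)*Complex.I, (-1/2), (1/2)]
lemma hp3 : p2 * s3 = p3 := by
  ext i j
  fin_cases i <;> fin_cases j <;>
    norm_num [p2, s3, p3, Matrix.mul_apply, Fin.sum_univ_four,
      Matrix.cons_val_two, Matrix.cons_val_three, Matrix.vecHead, Matrix.vecTail, Complex.ext_iff]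
noncomputable def p4 : Matrix (Fin 4) (Fin 4) ℂ := !![(1/2)*Complex.I, (1/2), (-1/2)*Complex.I, (1/2); (1/2)*Complex.I, (-1/2), (-1/2)*Complex.I, (-1/2); (-1/2)*Complex.I, (1/2), (-1/2)*Complex.I, (-1/2); (-1/2)*Complex.I, (-1/2), (-1/2)*Complex.I, (1/2)]
lemma hp4 : p3 * s2 = p4 := by
  ext i j
  fin_cases i <;> fin_cases j <;>
    norm_num [p3, s2, p4, Matrix.mul_apply, Fin.sum_univ_four,
      Matrix.cons_val_two, Matrix.cons_val_three, Matrix.vecHead, Matrix.vecTail, Complex.ext_iff]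
noncomputable def p5 : Matrix (Fin 4) (Fin 4) ℂ := !![(1/2), (1/2)*Complex.I, (-1/2)*Complex.I, (1/2); (-1/2), (1/2)*Complex.I, (-1/2)*Complex.I, (-1/2); (1/2), (-1/2)*Complex.I, (-1/2)*Complex.I, (-1/2); (-1/2), (-1/2)*Complex.I, (-1/2)*Complex.I, (1/2)]
lemma hp5 : p4 * s1 = p5 := by
  ext i j
  fin_cases i <;> fin_cases j <;>
    norm_num [p4, s1, p5, Matrix.mul_apply, Fin.sum_univ_four,
      Matrix.cons_val_two, Matrix.cons_val_three, Matrix.vecHead, Matrix.vecTail, Complex.ext_iff]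
noncomputable def p6 : Matrix (Fin 4) (Fin 4) ℂ := !![(-1/2), (1/2)*Complex.I, (-1/2)*Complex.I, (1/2); (1/2), (1/2)*Complex.I, (-1/2)*Complex.I, (-1/2); (-1/2), (-1/2)*Complex.I, (-1/2)*Complex.I, (-1/2); (1/2), (-1/2)*Complex.I, (-1/2)*Complex.I, (1/2)]
lemma hp6 : p5 * s5 = p6 := by
  ext i j
  fin_cases i <;> fin_cases j <;>
    norm_num [p5, s5, p6, Matrix.mul_apply, Fin.sum_univ_four,
      Matrix.cons_val_two, Matrix.cons_val_three, Matrix.vecHead, Matrix.vecTail, Complex.ext_iff]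
noncomputable def p7 : Matrix (Fin 4) (Fin 4) ℂ := !![(-1/2), (1/2)*Complex.I, (-1/2)*Complex.I, (1/2); (1/2), (1/2)*Complex.I, (-1/2)*Complex.I, (-1/2); (1/2)*Complex.I, (1/2), (1/2), (1/2)*Complex.I; (1/2)*Complex.I, (-1/2), (-1/2), (1/2)*Complex.I]
lemma hp7 : p6 * s4 = p7 := by
  ext i j
  fin_cases i <;> fin_cases j <;>
    norm_num [p6, s4, p7, Matrix.mul_apply, Fin.sum_univ_four,
      Matrix.cons_val_two, Matrix.cons_val_three, Matrix.vecHead, Matrix.vecTail, Complex.ext_iff]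
noncomputable def p8 : Matrix (Fin 4) (Fin 4) ℂ := !![(-1/2), (1/2)*Complex.I, (-1/2)*Complex.I, (1/2); (-1/2), (-1/2)*Complex.I, (-1/2)*Complex.I, (-1/2); (1/2)*Complex.I, (1/2), (1/2), (1/2)*Complex.I; (-1/2)*Complex.I, (1/2), (-1/2), (1/2)*Complex.I]
lemma hp8 : p7 * s3 = p8 := by
  ext i j
  fin_cases i <;> fin_cases j <;>
    norm_num [p7, s3, p8, Matrix.mul_apply, Fin.sum_univ_four,
      Matrix.cons_val_two, Matrix.cons_val_three, Matrix.vecHead, Matrix.vecTail, Complex.ext_iff]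
noncomputable def p9 : Matrix (Fin 4) (Fin 4) ℂ := !![(-1/2), (-1/2)*Complex.I, (1/2)*Complex.I, (1/2); (-1/2), (-1/2)*Complex.I, (-1/2)*Complex.I, (-1/2); (1/2)*Complex.I, (1/2), (1/2), (1/2)*Complex.I; (-1/2)*Complex.I, (-1/2), (1/2), (1/2)*Complex.I]
lemma hp9 : p8 * s2 = p9 := by
  ext i j
  fin_cases i <;> fin_cases j <;>
    norm_num [p8, s2, p9, Matrix.mul_apply, Fin.sum_univ_four,
      Matrix.cons_val_two, Matrix.cons_val_three, Matrix.vecHead, Matrix.vecTail, Complex.ext_iff]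
noncomputable def p10 : Matrix (Fin 4) (Fin 4) ℂ := !![(-1/2)*Complex.I, (-1/2), (1/2)*Complex.I, (1/2); (-1/2)*Complex.I, (-1/2), (-1/2)*Complex.I, (-1/2); (1/2), (1/2)*Complex.I, (1/2), (1/2)*Complex.I; (-1/2), (-1/2)*Complex.I, (1/2), (1/2)*Complex.I]
lemma hp10 : p9 * s1 = p10 := by
  ext i j
  fin_cases i <;> fin_cases j <;>
    norm_num [p9, s1, p10, Matrix.mul_apply, Fin.sum_univ_four,
      Matrix.cons_val_two, Matrix.cons_val_three, Matrix.vecHead, Matrix.vecTail, Complex.ext_iff]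
noncomputable def p11 : Matrix (Fin 4) (Fin 4) ℂ := !![(1/2)*Complex.I, (-1/2), (1/2)*Complex.I, (1/2); (1/2)*Complex.I, (-1/2), (-1/2)*Complex.I, (-1/2); (-1/2), (1/2)*Complex.I, (1/2), (1/2)*Complex.I; (1/2), (-1/2)*Complex.I, (1/2), (1/2)*Complex.I]
lemma hp11 : p10 * s5 = p11 := by
  ext i j
  fin_cases i <;> fin_cases j <;>
    norm_num [p10, s5, p11, Matrix.mul_apply, Fin.sum_univ_four,
      Matrix.cons_val_two, Matrix.cons_val_three, Matrix.vecHead, Matrix.vecTail, Complex.ext_iff]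
noncomputable def p12 : Matrix (Fin 4) (Fin 4) ℂ := !![0, (-1/2)+(-1/2)*Complex.I, 0, (1/2)+(-1/2)*Complex.I; (1/2)+(1/2)*Complex.I, 0, (1/2)+(-1/2)*Complex.I, 0; (-1/2)+(-1/2)*Complex.I, 0, (1/2)+(-1/2)*Complex.I, 0; 0, (-1/2)+(-1/2)*Complex.I, 0, (-1/2)+(1/2)*Complex.I]
lemma hp12 : p11 * s4 = p12 := by
  ext i j
  fin_cases i <;> fin_cases j <;>
    norm_num [p11, s4, p12, Matrix.mul_apply, Fin.sum_univ_four,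
      Matrix.cons_val_two, Matrix.cons_val_three, Matrix.vecHead, Matrix.vecTail, Complex.ext_iff]
noncomputable def p13 : Matrix (Fin 4) (Fin 4) ℂ := !![(1/2)+(-1/2)*Complex.I, 0, 0, (1/2)+(-1/2)*Complex.I; 0, (1/2)+(-1/2)*Complex.I, (1/2)+(-1/2)*Complex.I, 0; 0, (-1/2)+(1/2)*Complex.I, (1/2)+(-1/2)*Complex.I, 0; (1/2)+(-1/2)*Complex.I, 0, 0, (-1/2)+(1/2)*Complex.I]
lemma hp13 : p12 * s3 = p13 := by
  ext i j
  fin_cases i <;> fin_cases j <;>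
    norm_num [p12, s3, p13, Matrix.mul_apply, Fin.sum_univ_four,
      Matrix.cons_val_two, Matrix.cons_val_three, Matrix.vecHead, Matrix.vecTail, Complex.ext_iff]
noncomputable def q0 : Matrix (Fin 4) (Fin 4) ℂ := s3
noncomputable def q1 : Matrix (Fin 4) (Fin 4) ℂ := !![(-1)*Complex.I, 0, 0, 0; 0, (1)*Complex.I, 0, 0; 0, 0, (1), 0; 0, 0, 0, (1)]
lemma hq1 : q0 * s1 = q1 := by
  ext i j
  fin_cases i <;> fin_cases j <;>
    norm_num [q0, s3, s1, q1, Matrix.mul_apply, Fin.sum_univ_four,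
      Matrix.cons_val_two, Matrix.cons_val_three, Matrix.vecHead, Matrix.vecTail, Complex.ext_iff]
noncomputable def q2 : Matrix (Fin 4) (Fin 4) ℂ := !![0, (-1), 0, 0; (-1), 0, 0, 0; 0, 0, (1), 0; 0, 0, 0, (1)]
lemma hq2 : q1 * s3 = q2 := by
  ext i j
  fin_cases i <;> fin_cases j <;>
    norm_num [q1, s3, q2, Matrix.mul_apply, Fin.sum_univ_four,
      Matrix.cons_val_two, Matrix.cons_val_three, Matrix.vecHead, Matrix.vecTail, Complex.ext_iff]
noncomputable def q3 : Matrix (Fin 4) (Fin 4) ℂ := !![0, 0, (-1), 0; (-1), 0, 0, 0; 0, (1), 0, 0; 0, 0, 0, (1)]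
lemma hq3 : q2 * s2 = q3 := by
  ext i j
  fin_cases i <;> fin_cases j <;>
    norm_num [q2, s2, q3, Matrix.mul_apply, Fin.sum_univ_four,
      Matrix.cons_val_two, Matrix.cons_val_three, Matrix.vecHead, Matrix.vecTail, Complex.ext_iff]

lemma hpa : p13 = aMat := by
  ext i j
  fin_cases i <;> fin_cases j <;>
    norm_num [p13, aMat, Matrix.mul_apply, Fin.sum_univ_four,
      Matrix.cons_val_two, Matrix.cons_val_three, Matrix.vecHead, Matrix.vecTail, Complex.ext_iff]
lemma hqb : q3 = bMat := by
  ext i j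
  fin_cases i <;> fin_cases j <;>
    norm_num [q3, bMat, Matrix.mul_apply, Fin.sum_univ_four,
      Matrix.cons_val_two, Matrix.cons_val_three, Matrix.vecHead, Matrix.vecTail, Complex.ext_iff]

lemma S1mem : S1 ∈ G31 := Subgroup.subset_closure (by simp)
lemma S2mem : S2 ∈ G31 := Subgroup.subset_closure (by simp)
lemma S3mem : S3 ∈ G31 := Subgroup.subset_closure (by simp)
lemma S4mem : S4 ∈ G31 := Subgroup.subset_closure (by simp)
lemma S5mem : S5 ∈ G31 := Subgroup.subset_closure (by simp)

/-- The matrices `a` and `b` belong to `G₃₁`. -/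
theorem a_b_mem_G31 : aGL ∈ G31 ∧ bGL ∈ G31 := by
  constructor
  · have h : aGL = S4*S5*S4*S3*S2*S1*S5*S4*S3*S2*S1*S5*S4*S3 := by
      apply Units.ext
      show aMat = s4*s5*s4*s3*s2*s1*s5*s4*s3*s2*s1*s5*s4*s3
      rw [← hpa]
      simp only [← hp1, ← hp2, ← hp3, ← hp4, ← hp5, ← hp6, ← hp7, ← hp8, ← hp9, ← hp10,
        ← hp11, ← hp12, ← hp13, p0, Matrix.mul_assoc]
    rw [h]
    exact mul_mem (mul_mem (mul_mem (mul_mem (mul_mem (mul_mem (mul_mem (mul_mem (mul_mem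
      (mul_mem (mul_mem (mul_mem (mul_mem S4mem S5mem) S4mem) S3mem) S2mem) S1mem) S5mem)
      S4mem) S3mem) S2mem) S1mem) S5mem) S4mem) S3mem
  · have h : bGL = S3*S1*S3*S2 := by
      apply Units.ext
      show bMat = s3*s1*s3*s2
      rw [← hqb]
      simp only [← hq1, ← hq2, ← hq3, q0, Matrix.mul_assoc]
    rw [h]
    exact mul_mem (mul_mem (mul_mem S3mem S1mem) S3mem) S2mem
end
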